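/- Let S ⊆ ℚ be a set of time points containing the interval [i₁, i₂] (with i₁ ≤ i₂) and closed under the rule: if [a, b] ⊆ S then [a + t₁, b + t₂] ⊆ S, where 0 ≤ t₁ < t₂. Then the smallest such set contains the whole ray [i₁ + t₁·X, ∞) where X = ⌊(t₁ - (i₂ - i₁))/(t₂ - t₁)⌋ + 1 when t₁ > i₂ - i₁, and contains [i₁, ∞) otherwise. In particular, after finitely many applications the derived intervals overlap and become eventually constant. -/

import Mathlib

open Set

/-- Minimal-model closure of a single diamond-minus rule applied to a fact `P@[i₁,i₂]`:
the smallest set of time points containing `[i₁,i₂]` and closed under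
`[a,b] ⊆ S → [a+t₁, b+t₂] ⊆ S`. -/
theorem stmt_0 (t₁ t₂ i₁ i₂ : ℚ) (ht₁ : 0 ≤ t₁) (ht : t₁ < t₂) (hi : i₁ ≤ i₂)
    (C : Set ℚ)
    (hC : C = ⋂₀ {S : Set ℚ | Icc i₁ i₂ ⊆ S ∧
      ∀ a b : ℚ, a ≤ b → Icc a b ⊆ S → Icc (a + t₁) (b + t₂) ⊆ S}) :
    (t₁ > i₂ - i₁ →
      Ici (i₁ + t₁ * ((⌊(t₁ - (i₂ - i₁)) / (t₂ - t₁)⌋ + 1 : ℤ) : ℚ)) ⊆ C) ∧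
    (t₁ ≤ i₂ - i₁ → Ici i₁ ⊆ C) := by
  subst hC
  have ht₂ : 0 < t₂ := lt_of_le_of_lt ht₁ ht
  have key : ∀ (X : ℕ), t₁ - (i₂ - i₁) ≤ (X : ℚ) * (t₂ - t₁) →
      Ici (i₁ + t₁ * X) ⊆ ⋂₀ {S : Set ℚ | Icc i₁ i₂ ⊆ S ∧
        ∀ a b : ℚ, a ≤ b → Icc a b ⊆ S → Icc (a + t₁) (b + t₂) ⊆ S} := by
    intro X hX x hx S hS
    obtain ⟨hbase, hrule⟩ := hS
    have hiter : ∀ n : ℕ, Icc (i₁ + n * t₁) (i₂ + n * t₂) ⊆ S := by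
      intro n
      induction n with
      | zero => simpa using hbase
      | succ n ih =>
        have hab : i₁ + (n : ℚ) * t₁ ≤ i₂ + (n : ℚ) * t₂ := by
          have : (n : ℚ) * t₁ ≤ (n : ℚ) * t₂ :=
            mul_le_mul_of_nonneg_left ht.le (by positivity)
          linarith
        have h2 := hrule _ _ hab ih
        have heq : Icc (i₁ + (n : ℚ) * t₁ + t₁) (i₂ + (n : ℚ) * t₂ + t₂)
            = Icc (i₁ + ((n : ℕ) + 1 : ℕ) * t₁) (i₂ + ((n : ℕ) + 1 : ℕ) * t₂) := by
          push_cast; ring_nf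
        rwa [heq] at h2
    set c : ℕ := (⌈(x - i₂) / t₂⌉).toNat with hc
    set n : ℕ := max X c with hn
    have hx' : i₁ + (X : ℚ) * t₁ ≤ x := by
      have := hx; simp only [mem_Ici] at this; linarith [this, mul_comm t₁ (X : ℚ)]
    have hub : x ≤ i₂ + (n : ℚ) * t₂ := by
      have h1 : (x - i₂) / t₂ ≤ (c : ℚ) := by
        calc (x - i₂) / t₂ ≤ (⌈(x - i₂) / t₂⌉ : ℚ) := Int.le_ceil _
          _ ≤ (c : ℚ) := by exact_mod_cast Int.self_le_toNat _
      have h2 : (c : ℚ) ≤ (n : ℚ) := by exact_mod_cast Nat.le_max_right X c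
      have h3 : (x - i₂) / t₂ ≤ (n : ℚ) := h1.trans h2
      have := (div_le_iff₀ ht₂).mp h3
      linarith
    have hlb : i₁ + (n : ℚ) * t₁ ≤ x := by
      rcases le_or_gt c X with hcx | hcx
      · have : n = X := by simp [hn, hcx]
        rw [this]; exact hx'
      · have hnc : n = c := by simp [hn, hcx.le]
        rw [hnc]
        have hc1 : 1 ≤ c := by omega
        have hceil : (⌈(x - i₂) / t₂⌉ : ℤ) = (c : ℤ) := by
          rw [hc]; exact (Int.toNat_of_nonneg (by omega : 0 ≤ ⌈(x - i₂) / t₂⌉)).symm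
        have h4 : ((c : ℚ) - 1) < (x - i₂) / t₂ := by
          have := Int.ceil_lt_add_one (R := ℚ) ((x - i₂) / t₂)
          rw [hceil] at this
          push_cast at this ⊢
          linarith
        have h5 : ((c : ℚ) - 1) * t₂ < x - i₂ :=
          (lt_div_iff₀ ht₂).mp h4
        have hXc : (X : ℚ) ≤ (c : ℚ) - 1 := by
          have : (X : ℚ) + 1 ≤ (c : ℚ) := by exact_mod_cast hcx
          linarith
        have h6 : (X : ℚ) * (t₂ - t₁) ≤ ((c : ℚ) - 1) * (t₂ - t₁) :=
          mul_le_mul_of_nonneg_right hXc (by linarith)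
        nlinarith
    exact hiter n ⟨hlb, hub⟩
  constructor
  · intro hgt
    set q : ℚ := (t₁ - (i₂ - i₁)) / (t₂ - t₁) with hq
    have hq0 : 0 < q := div_pos (by linarith) (by linarith)
    have hfl0 : (0 : ℤ) ≤ ⌊q⌋ := Int.floor_nonneg.mpr hq0.le
    set X : ℕ := (⌊q⌋ + 1).toNat with hXdef
    have hcast : ((⌊q⌋ + 1 : ℤ) : ℚ) = (X : ℚ) := by
      rw [hXdef]; exact_mod_cast (Int.toNat_of_nonneg (by omega)).symm
    have hXbig : q < (X : ℚ) := by
      rw [← hcast]; push_cast; linarith [Int.lt_floor_add_one q]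
    have h7 : q * (t₂ - t₁) = t₁ - (i₂ - i₁) := by
      rw [hq]; exact div_mul_cancel₀ _ (sub_ne_zero.mpr ht.ne')
    have h8 : q * (t₂ - t₁) ≤ (X : ℚ) * (t₂ - t₁) :=
      mul_le_mul_of_nonneg_right hXbig.le (by linarith)
    have hkey := key X (by linarith)
    rw [hcast]
    exact hkey
  · intro hle
    have hkey := key 0 (by push_cast; linarith)
    simpa using hkey
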